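/- With n a positive integer and 0 ≤ m < n, the orthogonal VP polynomials q_{m,r}^n, defined in the variable t ∈ [0,π] by q_{m,r}^n(cos t) = cos(rt) for 0 ≤ r ≤ n−m, and q_{m,r}^n(cos t) = ((n+m−r)/(2m))cos(rt) + ((n−m−r)/(2m))cos((2n−r)t) for n−m < r < n, are pairwise orthogonal with respect to the inner product <F,G> = ∫_{-1}^{1} F(ξ)G(ξ)/√(1−ξ²) dξ: that is, <q_{m,r}^n, q_{m,r'}^n> = 0 for r ≠ r', 0 ≤ r, r' ≤ n−1. -/
import Mathlib

open Real Set intervalIntegral MeasureTheory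

lemma cos_image_Icc : Real.cos '' Icc 0 π = Icc (-1 : ℝ) 1 :=
  Subset.antisymm (by rintro x ⟨t, -, rfl⟩; exact Real.cos_mem_Icc t) Real.surjOn_cos

/-- Chebyshev-weight substitution: `ξ = cos t`. -/
lemma cheb_subst (g : ℝ → ℝ) :
    ∫ ξ in (-1 : ℝ)..1, g (Real.arccos ξ) / Real.sqrt (1 - ξ ^ 2)
      = ∫ t in (0 : ℝ)..π, g t := by
  rw [intervalIntegral.integral_of_le (by norm_num : (-1:ℝ) ≤ 1),
    intervalIntegral.integral_of_le Real.pi_pos.le,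
    ← MeasureTheory.integral_Icc_eq_integral_Ioc,
    ← MeasureTheory.integral_Icc_eq_integral_Ioc, ← cos_image_Icc,
    MeasureTheory.integral_image_eq_integral_abs_deriv_smul measurableSet_Icc
      (fun x _ => (Real.hasDerivAt_cos x).hasDerivWithinAt) Real.injOn_cos]
  rw [MeasureTheory.integral_Icc_eq_integral_Ioo, MeasureTheory.integral_Icc_eq_integral_Ioo]
  apply MeasureTheory.setIntegral_congr_fun measurableSet_Ioo
  intro t ht
  have hs : 0 < Real.sin t := Real.sin_pos_of_pos_of_lt_pi ht.1 ht.2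
  have h1 : Real.sqrt (1 - Real.cos t ^ 2) = Real.sin t := by
    rw [show (1 : ℝ) - Real.cos t ^ 2 = Real.sin t ^ 2 by
      have := Real.sin_sq_add_cos_sq t; linarith]
    exact Real.sqrt_sq hs.le
  show |(-Real.sin t)| • (g (Real.arccos (Real.cos t)) / Real.sqrt (1 - Real.cos t ^ 2)) = g t
  rw [Real.arccos_cos ht.1.le ht.2.le, h1, abs_neg, abs_of_pos hs, smul_eq_mul,
    mul_div_cancel₀ _ hs.ne']

lemma int_cos_int (k : ℤ) (hk : k ≠ 0) :
    ∫ t in (0 : ℝ)..π, Real.cos (k * t) = 0 := by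
  have hk' : (k : ℝ) ≠ 0 := Int.cast_ne_zero.mpr hk
  rw [intervalIntegral.integral_comp_mul_left Real.cos hk', integral_cos]
  simp [Real.sin_int_mul_pi]

lemma cos_orth (a b : ℕ) (hab : a ≠ b) :
    ∫ t in (0 : ℝ)..π, Real.cos (a * t) * Real.cos (b * t) = 0 := by
  have key : ∀ t : ℝ, Real.cos (a * t) * Real.cos (b * t)
      = (Real.cos ((((a : ℤ) - b : ℤ) : ℝ) * t) + Real.cos ((((a : ℤ) + b : ℤ) : ℝ) * t)) / 2 := by
    intro t
    push_cast
    rw [show ((a : ℝ) - b) * t = a * t - b * t by ring, show ((a : ℝ) + b) * t = a * t + b * t by ring,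
      Real.cos_sub, Real.cos_add]
    ring
  simp_rw [key]
  rw [intervalIntegral.integral_div, intervalIntegral.integral_add
    (Continuous.intervalIntegrable (by fun_prop) _ _)
    (Continuous.intervalIntegrable (by fun_prop) _ _),
    int_cos_int _ (by omega), int_cos_int _ (by omega)]
  norm_num

lemma cos_orth_comb (α β : ℝ) (a b c : ℕ) (h1 : a ≠ b) (h2 : a ≠ c) :
    ∫ t in (0 : ℝ)..π,
      Real.cos (a * t) * (α * Real.cos (b * t) + β * Real.cos (c * t)) = 0 := by
  have key : ∀ t : ℝ, Real.cos (a * t) * (α * Real.cos (b * t) + β * Real.cos (c * t))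
      = α * (Real.cos (a * t) * Real.cos (b * t)) + β * (Real.cos (a * t) * Real.cos (c * t)) :=
    fun t => by ring
  simp_rw [key]
  rw [intervalIntegral.integral_add
      (Continuous.intervalIntegrable (by fun_prop) _ _)
      (Continuous.intervalIntegrable (by fun_prop) _ _),
    intervalIntegral.integral_const_mul, intervalIntegral.integral_const_mul,
    cos_orth a b h1, cos_orth a c h2]
  ring

lemma cos_orth_comb' (α β : ℝ) (a b c : ℕ) (h1 : a ≠ b) (h2 : a ≠ c) :
    ∫ t in (0 : ℝ)..π,
      (α * Real.cos (b * t) + β * Real.cos (c * t)) * Real.cos (a * t) = 0 := by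
  have key : ∀ t : ℝ, (α * Real.cos (b * t) + β * Real.cos (c * t)) * Real.cos (a * t)
      = Real.cos (a * t) * (α * Real.cos (b * t) + β * Real.cos (c * t)) :=
    fun t => by ring
  simp_rw [key]
  exact cos_orth_comb α β a b c h1 h2

lemma cos_orth_comb2 (α β γ δ : ℝ) (a b c d : ℕ)
    (h1 : a ≠ c) (h2 : a ≠ d) (h3 : b ≠ c) (h4 : b ≠ d) :
    ∫ t in (0 : ℝ)..π,
      (α * Real.cos (a * t) + β * Real.cos (b * t)) *
        (γ * Real.cos (c * t) + δ * Real.cos (d * t)) = 0 := by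
  have key : ∀ t : ℝ, (α * Real.cos (a * t) + β * Real.cos (b * t)) *
        (γ * Real.cos (c * t) + δ * Real.cos (d * t))
      = α * (Real.cos (a * t) * (γ * Real.cos (c * t) + δ * Real.cos (d * t)))
        + β * (Real.cos (b * t) * (γ * Real.cos (c * t) + δ * Real.cos (d * t))) :=
    fun t => by ring
  simp_rw [key]
  rw [intervalIntegral.integral_add
      (Continuous.intervalIntegrable (by fun_prop) _ _)
      (Continuous.intervalIntegrable (by fun_prop) _ _),
    intervalIntegral.integral_const_mul, intervalIntegral.integral_const_mul,
    cos_orth_comb γ δ a c d h1 h2, cos_orth_comb γ δ b c d h3 h4]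
  ring

/-- Orthogonal de la Vallée Poussin polynomial `q_{m,r}^n`, as a function of `ξ ∈ [-1,1]`,
defined via `ξ = cos t`, i.e. `t = arccos ξ`. -/
noncomputable def qVP (n m r : ℕ) (ξ : ℝ) : ℝ :=
  if r ≤ n - m then Real.cos (r * Real.arccos ξ)
  else ((n : ℝ) + m - r) / (2 * m) * Real.cos (r * Real.arccos ξ)
      + ((n : ℝ) - m - r) / (2 * m) * Real.cos ((2 * (n : ℝ) - r) * Real.arccos ξ)

theorem qVP_orthogonal (n m : ℕ) (hm : m < n) :
    ∀ r r', r ≤ n - 1 → r' ≤ n - 1 → r ≠ r' →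
      ∫ ξ in (-1 : ℝ)..1, qVP n m r ξ * qVP n m r' ξ / Real.sqrt (1 - ξ ^ 2) = 0 := by
  intro r r' hr hr' hne
  -- express qVP via a function of t
  set f : ℕ → ℝ → ℝ := fun r t =>
    if r ≤ n - m then Real.cos (r * t)
    else ((n : ℝ) + m - r) / (2 * m) * Real.cos (r * t)
        + ((n : ℝ) - m - r) / (2 * m) * Real.cos ((2 * (n : ℝ) - r) * t) with hf
  have hq : ∀ s ξ, qVP n m s ξ = f s (Real.arccos ξ) := fun s ξ => rfl
  simp_rw [hq]
  rw [cheb_subst (fun t => f r t * f r' t)]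
  have hcast : ∀ s : ℕ, s ≤ n - 1 → (2 * (n : ℝ) - s) = ((2 * n - s : ℕ) : ℝ) := by
    intro s hs
    have : s ≤ 2 * n := by omega
    push_cast [Nat.cast_sub this]
    ring
  rw [hf]
  by_cases h1 : r ≤ n - m <;> by_cases h2 : r' ≤ n - m <;>
    simp only [h1, h2, if_true, if_false, if_pos, if_neg, not_false_iff]
  · exact cos_orth r r' hne
  · rw [hcast r' hr']
    exact cos_orth_comb _ _ r r' (2 * n - r') hne (by omega)
  · rw [hcast r hr]
    exact cos_orth_comb' _ _ r' r (2 * n - r) (Ne.symm hne) (by omega)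
  · rw [hcast r hr, hcast r' hr']
    exact cos_orth_comb2 _ _ _ _ r (2 * n - r) r' (2 * n - r') hne (by omega) (by omega)
      (by omega)
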